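/- Let B be a C*-algebra, let W and Z be Hilbert C*-modules over B, let X ⊆ W and Y ⊆ Z be ℂ-linear subspaces, and let T : X → Y, S : Y → X be maps satisfying ⟨T(x) | y⟩ = ⟨x | S(y)⟩ for all x ∈ X, y ∈ Y. Then for every n ∈ ℕ, all x₁, …, x_n ∈ X and all b₁, …, b_n ∈ B, one has the inequality ‖Σ_{k=1}^n T(x_k)·b_k‖² ≤ ‖Σ_{k=1}^n S(T(x_k))·b_k‖ · ‖Σ_{k=1}^n x_k·b_k‖, the first norm taken in Z and the last two in W. -/

import Mathlib

/-!
The Cauchy–Schwarz estimate in the proof of Theorem 4.1 ((ii) ⇒ (i)) of the paper: let `W`,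
`Z` be Hilbert C*-modules over a C*-algebra `B`, let `X ⊆ W` and `Y ⊆ Z` be ℂ-linear
subspaces, and let `T : X → Y`, `S : Y → X` satisfy `⟨T x | y⟩ = ⟨x | S y⟩`.  Then for all
`x₁, …, xₙ ∈ X` and `b₁, …, bₙ ∈ B`,
`‖Σ T(xₖ)·bₖ‖² ≤ ‖Σ S(T(xₖ))·bₖ‖ · ‖Σ xₖ·bₖ‖`.
-/

open scoped InnerProductSpace RightActions

/-- The Hilbert C⋆-module class as in the older Mathlib: a right `A`-module structure (via
`Aᵐᵒᵖ`) with an `A`-valued inner product satisfying `⟪x, y <• a⟫ = ⟪x, y⟫ * a`. -/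
class RightCStarModule (A : outParam <| Type*) (E : Type*) [NonUnitalSemiring A] [StarRing A]
    [Module ℂ A] [AddCommGroup E] [Module ℂ E] [PartialOrder A] [SMul Aᵐᵒᵖ E] [Norm A] [Norm E]
    extends Inner A E where
  inner_add_right {x} {y} {z} : inner x (y + z) = inner x y + inner x z
  inner_self_nonneg {x} : 0 ≤ inner x x
  inner_self {x} : inner x x = 0 ↔ x = 0
  inner_op_smul_right {a : A} {x y : E} : inner x (y <• a) = inner x y * a
  inner_smul_right_complex {z : ℂ} {x} {y} : inner x (z • y) = z • inner x y
  star_inner x y : star (inner x y) = inner y x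
  norm_eq_sqrt_norm_inner_self x : ‖x‖ = √‖inner x x‖

namespace RightCStarModule

section basic

variable {A E : Type*} [NonUnitalCStarAlgebra A] [PartialOrder A] [AddCommGroup E]
  [Module ℂ E] [SMul Aᵐᵒᵖ E] [Norm E] [RightCStarModule A E]

/-- The inner product as an additive map in the second variable. -/
noncomputable def innerRightHom (x : E) : E →+ A :=
  AddMonoidHom.mk' (fun y => ⟪x, y⟫_A) (fun _ _ => inner_add_right)

lemma rinner_add_left {x y z : E} : ⟪x + y, z⟫_A = ⟪x, z⟫_A + ⟪y, z⟫_A := by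
  rw [← star_inner, inner_add_right, star_add, star_inner, star_inner]

/-- The inner product as an additive map in the first variable. -/
noncomputable def innerLeftHom (y : E) : E →+ A :=
  AddMonoidHom.mk' (fun x => ⟪x, y⟫_A) (fun _ _ => rinner_add_left)

lemma rinner_op_smul_left {a : A} {x y : E} : ⟪x <• a, y⟫_A = star a * ⟪x, y⟫_A := by
  rw [← star_inner, inner_op_smul_right, star_mul, star_inner]

lemma rinner_sub_right {x y z : E} : ⟪x, y - z⟫_A = ⟪x, y⟫_A - ⟪x, z⟫_A :=
  map_sub (innerRightHom (A := A) x) y z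

lemma rinner_sub_left {x y z : E} : ⟪x - y, z⟫_A = ⟪x, z⟫_A - ⟪y, z⟫_A :=
  map_sub (innerLeftHom (A := A) z) x y

lemma rinner_zero_right {x : E} : ⟪x, 0⟫_A = 0 :=
  map_zero (innerRightHom (A := A) x)

lemma rinner_zero_left {x : E} : ⟪0, x⟫_A = 0 :=
  map_zero (innerLeftHom (A := A) x)

lemma rinner_sum_right {ι : Type*} {s : Finset ι} {x : E} {y : ι → E} :
    ⟪x, ∑ i ∈ s, y i⟫_A = ∑ i ∈ s, ⟪x, y i⟫_A :=
  map_sum (innerRightHom (A := A) x) y s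

lemma rinner_sum_left {ι : Type*} {s : Finset ι} {x : ι → E} {y : E} :
    ⟪∑ i ∈ s, x i, y⟫_A = ∑ i ∈ s, ⟪x i, y⟫_A :=
  map_sum (innerLeftHom (A := A) y) x s

lemma rinner_smul_right_real {r : ℝ} {x y : E} : ⟪x, r • y⟫_A = r • ⟪x, y⟫_A := by
  rw [← Complex.coe_smul, inner_smul_right_complex, Complex.coe_smul]

lemma rinner_smul_left_real {r : ℝ} {x y : E} : ⟪r • x, y⟫_A = r • ⟪x, y⟫_A := by
  rw [← star_inner, rinner_smul_right_real, star_smul, star_trivial, star_inner]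

lemma rnorm_sq_eq {x : E} : ‖x‖ ^ 2 = ‖⟪x, x⟫_A‖ := by
  rw [norm_eq_sqrt_norm_inner_self (A := A), Real.sq_sqrt (norm_nonneg _)]

variable [StarOrderedRing A]

lemma rinner_mul_inner_swap_le {x y : E} : ⟪y, x⟫_A * ⟪x, y⟫_A ≤ ‖x‖ ^ 2 • ⟪y, y⟫_A := by
  rcases eq_or_ne x 0 with h | h
  · have h0 : ‖x‖ = 0 := by
      rw [norm_eq_sqrt_norm_inner_self (A := A), h, rinner_zero_left]
      simp
    rw [h0, h, rinner_zero_left, rinner_zero_right]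
    simp
  · have h₁ : ∀ (a : A),
        (0 : A) ≤ ‖x‖ ^ 2 • (star a * a) - ‖x‖ ^ 2 • (star a * ⟪x, y⟫_A)
                  - ‖x‖ ^ 2 • (⟪y, x⟫_A * a) + ‖x‖ ^ 2 • (‖x‖ ^ 2 • ⟪y, y⟫_A) := fun a => by
      calc (0 : A) ≤ ⟪x <• a - ‖x‖ ^ 2 • y, x <• a - ‖x‖ ^ 2 • y⟫_A := by
                      exact inner_self_nonneg
            _ = star a * (⟪x, x⟫_A * a) - ‖x‖ ^ 2 • (star a * ⟪x, y⟫_A)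
                  - ‖x‖ ^ 2 • (⟪y, x⟫_A * a) + ‖x‖ ^ 2 • (‖x‖ ^ 2 • ⟪y, y⟫_A) := by
                      simp only [rinner_sub_right, inner_op_smul_right, rinner_sub_left,
                        rinner_op_smul_left, rinner_smul_left_real, mul_sub, sub_mul, mul_smul_comm,
                        rinner_smul_right_real, smul_sub, smul_mul_assoc, mul_assoc]
                      abel
            _ ≤ ‖x‖ ^ 2 • (star a * a) - ‖x‖ ^ 2 • (star a * ⟪x, y⟫_A)
                  - ‖x‖ ^ 2 • (⟪y, x⟫_A * a) + ‖x‖ ^ 2 • (‖x‖ ^ 2 • ⟪y, y⟫_A) := by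
                      gcongr
                      calc _ ≤ ‖⟪x, x⟫_A‖ • (star a * a) := by
                            rw [← mul_assoc]
                            exact CStarAlgebra.star_left_conjugate_le_norm_smul (hb := star_inner x x)
                        _ = (√‖⟪x, x⟫_A‖) ^ 2 • (star a * a) := by
                          rw [Real.sq_sqrt]
                          positivity
                        _ = ‖x‖ ^ 2 • (star a * a) := by rw [← norm_eq_sqrt_norm_inner_self]
    specialize h₁ ⟪x, y⟫_A
    simp only [star_inner, sub_self, zero_sub, le_neg_add_iff_add_le, add_zero] at h₁
    have hpos : 0 < ‖x‖ := by
      rw [norm_eq_sqrt_norm_inner_self (A := A), Real.sqrt_pos, norm_pos_iff]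
      intro H
      rw [inner_self] at H
      exact h H
    rwa [smul_le_smul_iff_of_pos_left (pow_pos hpos _)] at h₁

variable (E) in
lemma rnorm_inner_le {x y : E} : ‖⟪x, y⟫_A‖ ≤ ‖x‖ * ‖y‖ := by
  have := calc ‖⟪x, y⟫_A‖ ^ 2 = ‖⟪y, x⟫_A * ⟪x, y⟫_A‖ := by
                rw [← star_inner x y, CStarRing.norm_star_mul_self, pow_two]
    _ ≤ ‖‖x‖ ^ 2 • ⟪y, y⟫_A‖ := by
                refine CStarAlgebra.norm_le_norm_of_nonneg_of_le ?_ rinner_mul_inner_swap_le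
                rw [← star_inner x y]
                exact star_mul_self_nonneg ⟪x, y⟫_A
    _ = ‖x‖ ^ 2 * ‖⟪y, y⟫_A‖ := by simp [norm_smul]
    _ = ‖x‖ ^ 2 * ‖y‖ ^ 2 := by rw [rnorm_sq_eq (x := y)]
    _ = (‖x‖ * ‖y‖) ^ 2 := by simp only [mul_pow]
  refine (pow_le_pow_iff_left₀ (norm_nonneg ⟪x, y⟫_A) ?_ (by simp)).mp this
  exact mul_nonneg (by rw [norm_eq_sqrt_norm_inner_self (A := A)]; positivity)
    (by rw [norm_eq_sqrt_norm_inner_self (A := A)]; positivity)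

end basic

end RightCStarModule

theorem norm_sq_sum_smul_le_of_adjoint_relation
    {B W Z : Type*}
    [NonUnitalCStarAlgebra B] [PartialOrder B] [StarOrderedRing B]
    [NormedAddCommGroup W] [NormedSpace ℂ W] [SMul Bᵐᵒᵖ W] [RightCStarModule B W]
    [CompleteSpace W]
    [NormedAddCommGroup Z] [NormedSpace ℂ Z] [SMul Bᵐᵒᵖ Z] [RightCStarModule B Z]
    [CompleteSpace Z]
    (X : Submodule ℂ W) (Y : Submodule ℂ Z)
    (T : X → Y) (S : Y → X)
    (h : ∀ (x : X) (y : Y), ⟪(T x : Z), (y : Z)⟫_B = ⟪(x : W), (S y : W)⟫_B)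
    (n : ℕ) (x : Fin n → X) (b : Fin n → B) :
    ‖∑ k, ((T (x k) : Z) <• b k)‖ ^ 2 ≤
      ‖∑ k, ((S (T (x k)) : W) <• b k)‖ * ‖∑ k, ((x k : W) <• b k)‖ := by
  have key : ⟪∑ k, ((T (x k) : Z) <• b k), ∑ k, ((T (x k) : Z) <• b k)⟫_B
      = ⟪∑ k, ((x k : W) <• b k), ∑ k, ((S (T (x k)) : W) <• b k)⟫_B := by
    rw [RightCStarModule.rinner_sum_right, RightCStarModule.rinner_sum_right]
    refine Finset.sum_congr rfl fun k _ => ?_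
    rw [RightCStarModule.rinner_sum_left, RightCStarModule.rinner_sum_left]
    refine Finset.sum_congr rfl fun j _ => ?_
    rw [RightCStarModule.rinner_op_smul_left, RightCStarModule.rinner_op_smul_left,
      RightCStarModule.inner_op_smul_right, RightCStarModule.inner_op_smul_right, h]
  calc ‖∑ k, ((T (x k) : Z) <• b k)‖ ^ 2
      = ‖⟪∑ k, ((x k : W) <• b k), ∑ k, ((S (T (x k)) : W) <• b k)⟫_B‖ := by
        rw [RightCStarModule.rnorm_sq_eq, key]
    _ ≤ ‖∑ k, ((x k : W) <• b k)‖ * ‖∑ k, ((S (T (x k)) : W) <• b k)‖ :=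
        RightCStarModule.rnorm_inner_le W
    _ = _ := mul_comm _ _
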